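/- Let T and U be non-singular linear maps on ℝ² with σ_1(U) > σ_2(U). Let v₁(T), v₂(T) be orthonormal unit vectors with |T(v_i)| = σ_i(T) (any orthonormal pair if σ_1(T) = σ_2(T)), let w₁(U) = U(v₁(U)) where |U(v₁(U))| = σ_1(U), and write ŵ₁(U) = w₁(U)/|w₁(U)| = a v₁(T) + b v₂(T). Then for every 0 ≤ α ≤ 2, Φ^α(TU) ≥ |a|^α Φ^α(T) Φ^α(U). -/

import Mathlib

open scoped ENNReal Topology

noncomputable section

namespace CodeTreeFractal

/-- The first (largest) singular value of a linear map on `ℝ²`: the operator norm. -/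
def sv1 (T : EuclideanSpace ℝ (Fin 2) →L[ℝ] EuclideanSpace ℝ (Fin 2)) : ℝ := ‖T‖

/-- The second (smallest) singular value of a linear map on `ℝ²`: the minimum of
`‖T v‖` over unit vectors `v`. -/
def sv2 (T : EuclideanSpace ℝ (Fin 2) →L[ℝ] EuclideanSpace ℝ (Fin 2)) : ℝ :=
  sInf {s : ℝ | ∃ v : EuclideanSpace ℝ (Fin 2), ‖v‖ = 1 ∧ s = ‖T v‖}

lemma sv2_set_nonempty (T : EuclideanSpace ℝ (Fin 2) →L[ℝ] EuclideanSpace ℝ (Fin 2)) :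
    {s : ℝ | ∃ v : EuclideanSpace ℝ (Fin 2), ‖v‖ = 1 ∧ s = ‖T v‖}.Nonempty := by
  refine ⟨‖T (EuclideanSpace.single 0 (1:ℝ))‖, EuclideanSpace.single 0 (1:ℝ), ?_, rfl⟩
  simp [EuclideanSpace.norm_single]

lemma sv2_set_bddBelow (T : EuclideanSpace ℝ (Fin 2) →L[ℝ] EuclideanSpace ℝ (Fin 2)) :
    BddBelow {s : ℝ | ∃ v : EuclideanSpace ℝ (Fin 2), ‖v‖ = 1 ∧ s = ‖T v‖} := by
  refine ⟨0, fun s hs => ?_⟩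
  obtain ⟨v, -, rfl⟩ := hs
  exact norm_nonneg _

lemma sv2_nonneg (T : EuclideanSpace ℝ (Fin 2) →L[ℝ] EuclideanSpace ℝ (Fin 2)) : 0 ≤ sv2 T :=
  le_csInf (sv2_set_nonempty T) (by rintro s ⟨v, -, rfl⟩; exact norm_nonneg _)

lemma sv2_le (T : EuclideanSpace ℝ (Fin 2) →L[ℝ] EuclideanSpace ℝ (Fin 2))
    {v : EuclideanSpace ℝ (Fin 2)} (hv : ‖v‖ = 1) : sv2 T ≤ ‖T v‖ :=
  csInf_le (sv2_set_bddBelow T) ⟨v, hv, rfl⟩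

lemma sv2_mul_norm_le (T : EuclideanSpace ℝ (Fin 2) →L[ℝ] EuclideanSpace ℝ (Fin 2))
    (x : EuclideanSpace ℝ (Fin 2)) : sv2 T * ‖x‖ ≤ ‖T x‖ := by
  rcases eq_or_ne x 0 with rfl | hx
  · simp
  · have hx' : ‖x‖ ≠ 0 := norm_ne_zero_iff.2 hx
    have hv : ‖(‖x‖⁻¹ • x)‖ = 1 := by
      rw [norm_smul, norm_inv, norm_norm, inv_mul_cancel₀ hx']
    have := sv2_le T hv
    rw [map_smul, norm_smul, norm_inv, norm_norm] at this
    have hxpos : 0 < ‖x‖ := lt_of_le_of_ne (norm_nonneg _) (Ne.symm hx')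
    calc sv2 T * ‖x‖ ≤ (‖x‖⁻¹ * ‖T x‖) * ‖x‖ := by nlinarith
      _ = ‖T x‖ := by field_simp

lemma sv2_comp (T U : EuclideanSpace ℝ (Fin 2) →L[ℝ] EuclideanSpace ℝ (Fin 2)) :
    sv2 T * sv2 U ≤ sv2 (T.comp U) := by
  refine le_csInf (sv2_set_nonempty _) ?_
  rintro s ⟨v, hv, rfl⟩
  have h1 : sv2 U * ‖v‖ ≤ ‖U v‖ := sv2_mul_norm_le U v
  rw [hv, mul_one] at h1
  have h2 : sv2 T * ‖U v‖ ≤ ‖T (U v)‖ := sv2_mul_norm_le T (U v)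
  have := sv2_nonneg T
  calc sv2 T * sv2 U ≤ sv2 T * ‖U v‖ := by nlinarith
    _ ≤ ‖T (U v)‖ := h2
    _ = ‖(T.comp U) v‖ := rfl

lemma inner_image_eq_zero (T : EuclideanSpace ℝ (Fin 2) →L[ℝ] EuclideanSpace ℝ (Fin 2))
    (v1 v2 : EuclideanSpace ℝ (Fin 2)) (hv1 : ‖v1‖ = 1) (hv2 : ‖v2‖ = 1)
    (horth : (inner ℝ v1 v2 : ℝ) = 0) (h1 : ‖T v1‖ = ‖T‖) :
    (inner ℝ (T v1) (T v2) : ℝ) = 0 := by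
  set c : ℝ := inner ℝ (T v1) (T v2) with hc
  have key : ∀ t : ℝ, ‖T‖^2 + 2*t*c + t^2*‖T v2‖^2 ≤ ‖T‖^2 * (1 + t^2) := by
    intro t
    have hle : ‖T (v1 + t • v2)‖ ≤ ‖T‖ * ‖v1 + t • v2‖ := T.le_opNorm _
    have hnv : ‖v1 + t • v2‖^2 = 1 + t^2 := by
      rw [norm_add_sq_real, inner_smul_right, horth, norm_smul, hv1, hv2]
      simp [mul_pow, sq_abs]
    have hTv : ‖T (v1 + t • v2)‖^2 = ‖T‖^2 + 2*t*c + t^2*‖T v2‖^2 := by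
      rw [map_add, map_smul, norm_add_sq_real, inner_smul_right, norm_smul, h1]
      simp [mul_pow, sq_abs, hc]
      ring
    have hsq : ‖T (v1 + t • v2)‖^2 ≤ (‖T‖ * ‖v1 + t • v2‖)^2 := by
      exact pow_le_pow_left₀ (norm_nonneg _) hle 2
    rw [hTv, mul_pow, hnv] at hsq
    linarith [hsq]
  have hD : 0 ≤ ‖T‖^2 - ‖T v2‖^2 := by
    have := T.le_opNorm v2
    rw [hv2, mul_one] at this
    nlinarith [norm_nonneg (T v2)]
  set D : ℝ := ‖T‖^2 - ‖T v2‖^2 with hDdef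
  have hDpos : (0:ℝ) < D + 1 := by linarith
  set t : ℝ := c / (D + 1) with htdef
  have ht : t * (D + 1) = c := div_mul_cancel₀ _ (ne_of_gt hDpos)
  have h := key t
  have hct : 2*t*c = 2*t^2*(D+1) := by rw [← ht]; ring
  have ht2 : t^2 * (D+2) ≤ 0 := by nlinarith
  have htz : t^2 = 0 := le_antisymm (by nlinarith [sq_nonneg t]) (sq_nonneg t)
  have ht0 : t = 0 := by
    have := sq_eq_zero_iff.mp htz
    exact this
  rw [← ht, ht0, zero_mul]
/-- The singular value function `Φ^α` on `ℝ²`, for `0 ≤ α ≤ 2`. -/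
def Phi2 (T : EuclideanSpace ℝ (Fin 2) →L[ℝ] EuclideanSpace ℝ (Fin 2)) (α : ℝ) : ℝ :=
  if α ≤ 1 then sv1 T ^ α else sv1 T * sv2 T ^ (α - 1)

/-- The lower singular value function `Φ̲^α` on `ℝ²`, for `0 ≤ α ≤ 2`. -/
def PhiLow2 (T : EuclideanSpace ℝ (Fin 2) →L[ℝ] EuclideanSpace ℝ (Fin 2)) (α : ℝ) : ℝ :=
  if α ≤ 1 then sv2 T ^ α else sv2 T * sv1 T ^ (α - 1)

set_option maxHeartbeats 1000000 in
/-- inequality \eqref{phibound}: if `ŵ₁(U) = a v₁(T) + b v₂(T)`, then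
`Φ^α(TU) ≥ |a|^α Φ^α(T) Φ^α(U)` for `0 ≤ α ≤ 2`. -/
theorem statement18
    (T U : EuclideanSpace ℝ (Fin 2) →L[ℝ] EuclideanSpace ℝ (Fin 2))
    (hT : Function.Injective T) (hU : Function.Injective U)
    (hUdistinct : sv2 U < sv1 U)
    (v1T v2T v1U : EuclideanSpace ℝ (Fin 2))
    (hv1T : ‖v1T‖ = 1) (hv2T : ‖v2T‖ = 1)
    (horth : (inner ℝ v1T v2T : ℝ) = 0)
    (hTv1 : ‖T v1T‖ = sv1 T) (hTv2 : ‖T v2T‖ = sv2 T)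
    (hv1U : ‖v1U‖ = 1) (hUv1 : ‖U v1U‖ = sv1 U)
    (a b : ℝ)
    (hdecomp : (‖U v1U‖)⁻¹ • (U v1U) = a • v1T + b • v2T)
    (α : ℝ) (hα0 : 0 ≤ α) (hα2 : α ≤ 2) :
    |a| ^ α * (Phi2 T α * Phi2 U α) ≤ Phi2 (T.comp U) α := by
  have hsv1U : 0 < sv1 U := lt_of_le_of_lt (sv2_nonneg U) hUdistinct
  have hsv1Tnn : 0 ≤ sv1 T := norm_nonneg T
  have hsv2Tnn : 0 ≤ sv2 T := sv2_nonneg T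
  have hsv2Unn : 0 ≤ sv2 U := sv2_nonneg U
  have hsv1TUnn : 0 ≤ sv1 (T.comp U) := norm_nonneg _
  have hsv2TUnn : 0 ≤ sv2 (T.comp U) := sv2_nonneg _
  have hUw : ‖U v1U‖ ≠ 0 := by rw [hUv1]; exact ne_of_gt hsv1U
  -- a^2 + b^2 = 1
  have hw1 : ‖(‖U v1U‖⁻¹ • U v1U)‖ = 1 := by
    rw [norm_smul, norm_inv, norm_norm, inv_mul_cancel₀ hUw]
  have hab : a^2 + b^2 = 1 := by
    have h := congrArg (fun x => ‖x‖^2) hdecomp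
    simp only [hw1] at h
    rw [norm_add_sq_real, inner_smul_left, inner_smul_right, horth, norm_smul, norm_smul,
      hv1T, hv2T] at h
    simp only [mul_one, mul_zero, one_pow, mul_pow, sq_abs, Real.norm_eq_abs] at h
    nlinarith [h]
  have habs : |a| ≤ 1 := by
    rw [← abs_one]
    apply abs_le_abs <;> nlinarith [abs_nonneg a, sq_abs a, neg_abs_le a, le_abs_self a]
  -- orthogonality of images
  have hortT : (inner ℝ (T v1T) (T v2T) : ℝ) = 0 :=
    inner_image_eq_zero T v1T v2T hv1T hv2T horth hTv1
  -- ‖T w‖ ≥ |a| * sv1 T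
  have hTw : |a| * sv1 T ≤ ‖T (‖U v1U‖⁻¹ • U v1U)‖ := by
    rw [hdecomp]
    have hsq : ‖T (a • v1T + b • v2T)‖^2 = a^2 * (sv1 T)^2 + b^2 * (sv2 T)^2 := by
      rw [map_add, map_smul, map_smul, norm_add_sq_real, inner_smul_left, inner_smul_right,
        hortT, norm_smul, norm_smul, hTv1, hTv2]
      simp only [mul_zero, mul_pow, sq_abs, Real.norm_eq_abs]
      ring
    nlinarith [norm_nonneg (T (a • v1T + b • v2T)), abs_nonneg a, sq_abs a,
      mul_nonneg (abs_nonneg a) hsv1Tnn, sq_nonneg (b * sv2 T)]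
  -- key1 : sv1 bound
  have key1 : |a| * sv1 T * sv1 U ≤ sv1 (T.comp U) := by
    have h1 : ‖(T.comp U) v1U‖ ≤ sv1 (T.comp U) := by
      have := (T.comp U).le_opNorm v1U
      rwa [hv1U, mul_one] at this
    have h2 : (T.comp U) v1U = ‖U v1U‖ • T (‖U v1U‖⁻¹ • U v1U) := by
      rw [map_smul, smul_smul, mul_inv_cancel₀ hUw, one_smul]; rfl
    have h3 : ‖(T.comp U) v1U‖ = sv1 U * ‖T (‖U v1U‖⁻¹ • U v1U)‖ := by
      rw [h2, norm_smul, norm_norm, hUv1]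
    calc |a| * sv1 T * sv1 U = sv1 U * (|a| * sv1 T) := by ring
      _ ≤ sv1 U * ‖T (‖U v1U‖⁻¹ • U v1U)‖ := by
          exact mul_le_mul_of_nonneg_left hTw (le_of_lt hsv1U)
      _ = ‖(T.comp U) v1U‖ := h3.symm
      _ ≤ sv1 (T.comp U) := h1
  have key2 : sv2 T * sv2 U ≤ sv2 (T.comp U) := sv2_comp T U
  -- split on α ≤ 1
  by_cases h1 : α ≤ 1
  · simp only [Phi2, if_pos h1]
    calc |a| ^ α * (sv1 T ^ α * sv1 U ^ α)
        = (|a| * sv1 T * sv1 U) ^ α := by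
          rw [Real.mul_rpow (mul_nonneg (abs_nonneg a) hsv1Tnn) (le_of_lt hsv1U),
            Real.mul_rpow (abs_nonneg a) hsv1Tnn]
          ring
      _ ≤ sv1 (T.comp U) ^ α :=
          Real.rpow_le_rpow (mul_nonneg (mul_nonneg (abs_nonneg a) hsv1Tnn) (le_of_lt hsv1U))
            key1 hα0
  · simp only [Phi2, if_neg h1]
    have hα1 : 1 < α := lt_of_not_ge h1
    have hαm : 0 ≤ α - 1 := by linarith
    have hpow : |a| ^ α ≤ |a| := by
      rcases eq_or_ne a 0 with rfl | ha
      · rw [abs_zero, Real.zero_rpow (by positivity)]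
      · have hapos : 0 < |a| := abs_pos.2 ha
        calc |a| ^ α ≤ |a| ^ (1:ℝ) :=
            Real.rpow_le_rpow_of_exponent_ge hapos habs (le_of_lt hα1)
          _ = |a| := Real.rpow_one _
    have hrpow2 : (sv2 T * sv2 U) ^ (α - 1) ≤ sv2 (T.comp U) ^ (α - 1) :=
      Real.rpow_le_rpow (mul_nonneg hsv2Tnn hsv2Unn) key2 hαm
    calc |a| ^ α * (sv1 T * sv2 T ^ (α - 1) * (sv1 U * sv2 U ^ (α - 1)))
        = (|a| ^ α * (sv1 T * sv1 U)) * (sv2 T * sv2 U) ^ (α - 1) := by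
          rw [Real.mul_rpow hsv2Tnn hsv2Unn]; ring
      _ ≤ (|a| * (sv1 T * sv1 U)) * (sv2 T * sv2 U) ^ (α - 1) := by
          apply mul_le_mul_of_nonneg_right _ (Real.rpow_nonneg (mul_nonneg hsv2Tnn hsv2Unn) _)
          exact mul_le_mul_of_nonneg_right hpow (mul_nonneg hsv1Tnn (le_of_lt hsv1U))
      _ ≤ sv1 (T.comp U) * (sv2 T * sv2 U) ^ (α - 1) := by
          apply mul_le_mul_of_nonneg_right _ (Real.rpow_nonneg (mul_nonneg hsv2Tnn hsv2Unn) _)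
          calc |a| * (sv1 T * sv1 U) = |a| * sv1 T * sv1 U := by ring
            _ ≤ sv1 (T.comp U) := key1
      _ ≤ sv1 (T.comp U) * sv2 (T.comp U) ^ (α - 1) :=
          mul_le_mul_of_nonneg_left hrpow2 hsv1TUnn

end CodeTreeFractal
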